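/- Let M be a complex square matrix indexed by (m × k) × (m × k) for finite types m and k, and let N be the m × m matrix obtained by partially tracing out the second factor: N(i, j) = ∑_{a : k} M((i,a), (j,a)). Then ‖N‖₁ ≤ ‖M‖₁, i.e., the trace norm is non-increasing under partial trace. -/

import Mathlib

open scoped ComplexOrder

/-- The positive semidefinite square root of a positive semidefinite matrix
(removed from Mathlib; restored with its former definition). -/
noncomputable def Matrix.PosSemidef.sqrt {n : Type*} [Fintype n] [DecidableEq n]
    {A : Matrix n n ℂ} (hA : A.PosSemidef) : Matrix n n ℂ :=
  hA.1.eigenvectorUnitary.1 * Matrix.diagonal ((↑) ∘ (√·) ∘ hA.1.eigenvalues) *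
  (star hA.1.eigenvectorUnitary : Matrix n n ℂ)

/-- The trace norm of a complex square matrix `A`: the trace of `√(Aᴴ A)`
(equivalently, the sum of the singular values of `A`). -/
noncomputable def traceNorm {m : Type*} [Fintype m] [DecidableEq m] (A : Matrix m m ℂ) : ℝ :=
  ((Matrix.posSemidef_conjTranspose_mul_self A).sqrt).trace.re

section TraceNormAux
open Matrix Finset Complex


namespace TNAux
set_option linter.unusedSectionVars false

variable {n : Type*} [Fintype n] [DecidableEq n]

noncomputable def nsq {n : Type*} [Fintype n] (x : n → ℂ) : ℝ := ∑ i, Complex.normSq (x i)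

lemma nsq_nonneg {n : Type*} [Fintype n] (x : n → ℂ) : 0 ≤ nsq x :=
  Finset.sum_nonneg fun _ _ => Complex.normSq_nonneg _

lemma dot_self (x : n → ℂ) : star x ⬝ᵥ x = (nsq x : ℂ) := by
  simp [nsq, dotProduct, Complex.normSq_eq_conj_mul_self]

lemma nsq_eq_re (x : n → ℂ) : nsq x = (star x ⬝ᵥ x).re := by
  rw [dot_self]; simp

lemma abs_dot_le (x y : n → ℂ) :
    ‖star x ⬝ᵥ y‖ ≤ Real.sqrt (nsq x) * Real.sqrt (nsq y) := by
  have h1 : ‖star x ⬝ᵥ y‖ ≤ ∑ i, ‖x i‖ * ‖y i‖ := by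
    refine (norm_sum_le _ _).trans_eq ?_
    refine Finset.sum_congr rfl fun i _ => ?_
    simp [_root_.map_mul]
  refine h1.trans ?_
  have h2 := Real.sum_mul_le_sqrt_mul_sqrt Finset.univ (fun i => ‖x i‖)
    (fun i => ‖y i‖)
  simpa [nsq, Complex.sq_norm] using h2

lemma star_mulVec_dot (A : Matrix n n ℂ) (x y : n → ℂ) :
    star (A *ᵥ x) ⬝ᵥ y = star x ⬝ᵥ (Aᴴ *ᵥ y) := by
  rw [star_mulVec, dotProduct_mulVec]

lemma conj_diag (U C : Matrix n n ℂ) (j : n) :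
    (star U * C * U) j j = star (fun i => U i j) ⬝ᵥ C *ᵥ (fun i => U i j) := by
  simp only [mul_apply, mulVec, dotProduct, Pi.star_apply, star_apply, Finset.mul_sum,
    Finset.sum_mul]
  rw [Finset.sum_comm]
  refine Finset.sum_congr rfl fun a _ => Finset.sum_congr rfl fun b _ => ?_
  ring

end TNAux

namespace TNAux2
open TNAux
variable {n : Type*} [Fintype n] [DecidableEq n]
set_option linter.unusedSectionVars false

def Contraction {n : Type*} [Fintype n] (B : Matrix n n ℂ) : Prop :=
  ∀ x : n → ℂ, nsq (B *ᵥ x) ≤ nsq x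

lemma contraction_of_proj (B : Matrix n n ℂ)
    (h : (Bᴴ * B) * (Bᴴ * B) = Bᴴ * B) : Contraction B := by
  intro x
  set P := Bᴴ * B with hPdef
  have hPH : Pᴴ = P := by simp [hPdef, Matrix.conjTranspose_mul]
  have hBx : nsq (B *ᵥ x) = (star x ⬝ᵥ P *ᵥ x).re := by
    rw [nsq_eq_re, star_mulVec_dot, ← mulVec_mulVec]
  have hPx : nsq (P *ᵥ x) = (star x ⬝ᵥ P *ᵥ x).re := by
    rw [nsq_eq_re, star_mulVec_dot, hPH, mulVec_mulVec, h]
  set t := (star x ⬝ᵥ P *ᵥ x).re with ht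
  have htnn : 0 ≤ t := by rw [← hBx]; exact nsq_nonneg _
  have hle : t ≤ Real.sqrt (nsq x) * Real.sqrt t := by
    calc t ≤ ‖star x ⬝ᵥ P *ᵥ x‖ := Complex.re_le_norm _
    _ ≤ Real.sqrt (nsq x) * Real.sqrt (nsq (P *ᵥ x)) := abs_dot_le _ _
    _ = Real.sqrt (nsq x) * Real.sqrt t := by rw [hPx]
  rw [hBx]
  rcases eq_or_lt_of_le htnn with h0 | h0
  · rw [← h0]; exact nsq_nonneg x
  · have hsq : t * t ≤ (Real.sqrt (nsq x) * Real.sqrt t) * (Real.sqrt (nsq x) * Real.sqrt t) :=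
      mul_self_le_mul_self htnn hle
    have heq : (Real.sqrt (nsq x) * Real.sqrt t) * (Real.sqrt (nsq x) * Real.sqrt t)
        = nsq x * t := by
      rw [mul_mul_mul_comm, Real.mul_self_sqrt (nsq_nonneg x), Real.mul_self_sqrt htnn]
    rw [heq] at hsq
    exact le_of_mul_le_mul_right hsq h0

end TNAux2

namespace TNAux3
variable {n : Type*} [Fintype n] [DecidableEq n] (A : Matrix n n ℂ)
set_option linter.unusedSectionVars false

noncomputable abbrev hH := (Matrix.posSemidef_conjTranspose_mul_self A).1

lemma hU1 : ((hH A).eigenvectorUnitary : Matrix n n ℂ) * star ((hH A).eigenvectorUnitary : Matrix n n ℂ) = 1 :=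
  mem_unitaryGroup_iff.mp ((hH A).eigenvectorUnitary).2

lemma hU2 : star ((hH A).eigenvectorUnitary : Matrix n n ℂ) * ((hH A).eigenvectorUnitary : Matrix n n ℂ) = 1 :=
  mem_unitaryGroup_iff'.mp ((hH A).eigenvectorUnitary).2

lemma traceNorm_eq_sum :
    traceNorm A = ∑ j, Real.sqrt ((hH A).eigenvalues j) := by
  unfold traceNorm Matrix.PosSemidef.sqrt
  rw [Matrix.trace_mul_cycle]
  rw [hU2, Matrix.one_mul, Matrix.trace_diagonal]
  simp

end TNAux3

namespace TNAux4
open TNAux TNAux2 TNAux3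
variable {n : Type*} [Fintype n] [DecidableEq n] (A : Matrix n n ℂ)
set_option linter.unusedSectionVars false

lemma diag_conj (B : Matrix n n ℂ) (hB : Contraction B) (j : n) :
    ‖(star ((hH A).eigenvectorUnitary : Matrix n n ℂ) * (B * A)
      * ((hH A).eigenvectorUnitary : Matrix n n ℂ)) j j‖
      ≤ Real.sqrt ((hH A).eigenvalues j) := by
  set U := ((hH A).eigenvectorUnitary : Matrix n n ℂ) with hUdef
  set u : n → ℂ := fun i => U i j with hu
  rw [conj_diag]
  have h1 : nsq u = 1 := by
    have h' : (star U * U) j j = (nsq u : ℂ) := by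
      rw [← dot_self]
      simp [mul_apply, dotProduct, hu]
    rw [hU2 A] at h'
    simp only [Matrix.one_apply_eq] at h'
    exact_mod_cast h'.symm
  have h2 : nsq (A *ᵥ u) = (hH A).eigenvalues j := by
    have h3 : star (A *ᵥ u) ⬝ᵥ (A *ᵥ u) = (star U * (Aᴴ * A) * U) j j := by
      rw [conj_diag, star_mulVec_dot, mulVec_mulVec]
    rw [show star U * (Aᴴ * A) * U = diagonal (RCLike.ofReal ∘ (hH A).eigenvalues) by
      have hd := Matrix.IsHermitian.conjStarAlgAut_star_eigenvectorUnitary (hH A)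
      rw [Unitary.conjStarAlgAut_star_apply] at hd
      simpa only [Unitary.coe_star] using hd] at h3
    rw [nsq_eq_re, h3]
    simp [Matrix.diagonal_apply_eq]
  calc ‖star u ⬝ᵥ (B * A) *ᵥ u‖
      ≤ Real.sqrt (nsq u) * Real.sqrt (nsq ((B * A) *ᵥ u)) := abs_dot_le _ _
    _ ≤ 1 * Real.sqrt (nsq (A *ᵥ u)) := by
        rw [h1, Real.sqrt_one]
        refine mul_le_mul_of_nonneg_left ?_ zero_le_one
        rw [← mulVec_mulVec]
        exact Real.sqrt_le_sqrt (hB _)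
    _ = Real.sqrt ((hH A).eigenvalues j) := by rw [one_mul, h2]

lemma abs_trace_mul_le (B : Matrix n n ℂ) (hB : Contraction B) :
    ‖(B * A).trace‖ ≤ traceNorm A := by
  set U := ((hH A).eigenvectorUnitary : Matrix n n ℂ) with hUdef
  have htr : (B * A).trace = (star U * (B * A) * U).trace := by
    rw [Matrix.trace_mul_cycle, hU1, Matrix.one_mul]
  rw [htr, traceNorm_eq_sum, Matrix.trace]
  refine (norm_sum_le _ _).trans ?_
  exact Finset.sum_le_sum fun j _ => diag_conj A B hB j

end TNAux4

namespace TNAux5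
open TNAux TNAux2 TNAux3
set_option linter.unusedSectionVars false

noncomputable def g (t : ℝ) : ℝ := if 0 < t then 1 / Real.sqrt t else 0

lemma g_mul_self {d : ℝ} (hd : 0 ≤ d) : g d * d = Real.sqrt d := by
  unfold g; split_ifs with h
  · rw [div_mul_eq_mul_div, one_mul, Real.div_sqrt]
  · have : d = 0 := le_antisymm (not_lt.mp h) hd
    simp [this]

lemma g_sq_aux (d : ℝ) : (g d * g d) * d * (g d * g d) = g d * g d := by
  unfold g; split_ifs with h
  · have hs : Real.sqrt d ≠ 0 := ne_of_gt (Real.sqrt_pos.mpr h)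
    rw [← Real.mul_self_sqrt h.le]
    field_simp
    rw [Real.sqrt_sq (Real.sqrt_nonneg d)]
  · ring

section general
variable {n : Type*} [Fintype n] [DecidableEq n]
variable (C U : Matrix n n ℂ) (dv : n → ℝ)

noncomputable def Bopt : Matrix n n ℂ :=
  U * (diagonal (fun j => ((g (dv j) : ℝ) : ℂ)) * (star U * Cᴴ))

lemma hcan1 (hU : star U * U = 1) (X : Matrix n n ℂ) : star U * (U * X) = X := by
  rw [← Matrix.mul_assoc, hU, Matrix.one_mul]

lemma hNN (hspec : Cᴴ * C = U * (diagonal (fun j => ((dv j : ℝ) : ℂ)) * star U))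
    (X : Matrix n n ℂ) :
    Cᴴ * (C * X) = U * (diagonal (fun j => ((dv j : ℝ) : ℂ)) * (star U * X)) := by
  rw [← Matrix.mul_assoc, hspec, Matrix.mul_assoc, Matrix.mul_assoc]

lemma hdd (f h : n → ℂ) (X : Matrix n n ℂ) :
    diagonal f * (diagonal h * X) = diagonal (fun j => f j * h j) * X := by
  rw [← Matrix.mul_assoc, Matrix.diagonal_mul_diagonal]

lemma hBoptH : (Bopt C U dv)ᴴ =
    C * (U * (diagonal (fun j => ((g (dv j) : ℝ) : ℂ)) * star U)) := by
  simp only [Bopt, Matrix.conjTranspose_mul, Matrix.conjTranspose_conjTranspose,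
    Matrix.diagonal_conjTranspose, Matrix.star_eq_conjTranspose, Matrix.mul_assoc]
  have hs : (star fun j => ((g (dv j) : ℝ) : ℂ)) = fun j => ((g (dv j) : ℝ) : ℂ) := by
    funext j; simp
  rw [hs]

lemma idem (hU : star U * U = 1)
    (hspec : Cᴴ * C = U * (diagonal (fun j => ((dv j : ℝ) : ℂ)) * star U)) :
    ((Bopt C U dv)ᴴ * Bopt C U dv) * ((Bopt C U dv)ᴴ * Bopt C U dv)
      = (Bopt C U dv)ᴴ * Bopt C U dv := by
  rw [hBoptH]
  simp only [Bopt, Matrix.mul_assoc, hcan1 U hU, hNN C U dv hspec, hdd]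
  have hfun : (fun j => ((g (dv j) : ℂ) * (g (dv j) : ℂ) * ((dv j : ℂ) * ((g (dv j) : ℂ) * (g (dv j) : ℂ))))) = fun j => ((g (dv j) : ℂ) * (g (dv j) : ℂ)) := by
    funext j
    rw [show ((g (dv j) : ℂ) * (g (dv j) : ℂ) * ((dv j : ℂ) * ((g (dv j) : ℂ) * (g (dv j) : ℂ)))) = (((g (dv j) * g (dv j)) * dv j * (g (dv j) * g (dv j)) : ℝ) : ℂ) by push_cast; ring,
      g_sq_aux (dv j)]
    push_cast
    ring
  rw [hfun]

lemma contraction_Bopt (hU : star U * U = 1)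
    (hspec : Cᴴ * C = U * (diagonal (fun j => ((dv j : ℝ) : ℂ)) * star U)) :
    Contraction (Bopt C U dv) :=
  contraction_of_proj _ (idem C U dv hU hspec)

lemma trace_Bopt (hU : star U * U = 1)
    (hspec : Cᴴ * C = U * (diagonal (fun j => ((dv j : ℝ) : ℂ)) * star U)) :
    (Bopt C U dv * C).trace = ∑ j, ((g (dv j) * dv j : ℝ) : ℂ) := by
  have e1 : Bopt C U dv * C =
      U * (diagonal (fun j => ((g (dv j) * dv j : ℝ) : ℂ)) * star U) := by
    simp only [Bopt, Matrix.mul_assoc]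
    rw [hspec, hcan1 U hU, hdd]
    push_cast
    rfl
  rw [e1, ← Matrix.mul_assoc, Matrix.trace_mul_comm, ← Matrix.mul_assoc, hU, Matrix.one_mul,
    Matrix.trace_diagonal]

end general

lemma exists_contraction {n : Type*} [Fintype n] [DecidableEq n] (N : Matrix n n ℂ) :
    ∃ B : Matrix n n ℂ, Contraction B ∧ (B * N).trace = ((traceNorm N : ℝ) : ℂ) := by
  have hspec : Nᴴ * N = ((hH N).eigenvectorUnitary : Matrix n n ℂ) *
      (diagonal (fun j => (((hH N).eigenvalues j : ℝ) : ℂ)) *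
        star ((hH N).eigenvectorUnitary : Matrix n n ℂ)) := by
    conv_lhs => rw [(hH N).spectral_theorem]
    rw [Unitary.conjStarAlgAut_apply, Matrix.mul_assoc]
    rfl
  refine ⟨Bopt N ((hH N).eigenvectorUnitary : Matrix n n ℂ) (hH N).eigenvalues,
    contraction_Bopt _ _ _ (hU2 N) hspec, ?_⟩
  rw [trace_Bopt _ _ _ (hU2 N) hspec, traceNorm_eq_sum]
  push_cast
  refine Finset.sum_congr rfl fun j _ => ?_
  rw [← g_mul_self ((Matrix.posSemidef_conjTranspose_mul_self N).eigenvalues_nonneg j)]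
  push_cast
  ring

end TNAux5

namespace TNFinal
open TNAux TNAux2 TNAux3 TNAux5
set_option linter.unusedSectionVars false

variable {m k : Type*} [Fintype m] [DecidableEq m] [Fintype k] [DecidableEq k]

def lift (B : Matrix m m ℂ) : Matrix (m × k) (m × k) ℂ :=
  fun p q => if p.2 = q.2 then B p.1 q.1 else 0

lemma lift_mulVec (B : Matrix m m ℂ) (x : m × k → ℂ) (i : m) (a : k) :
    (lift B *ᵥ x) (i, a) = (B *ᵥ fun j => x (j, a)) i := by
  simp [lift, mulVec, dotProduct, Fintype.sum_prod_type, ite_mul, Finset.sum_ite_eq,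
    Finset.sum_ite_eq']

lemma lift_contraction (B : Matrix m m ℂ) (hB : Contraction B) :
    Contraction (lift (k := k) B) := by
  intro x
  have h1 : nsq (lift (k := k) B *ᵥ x) = ∑ a : k, nsq (B *ᵥ fun j => x (j, a)) := by
    simp only [nsq, Fintype.sum_prod_type]
    rw [Finset.sum_comm]
    refine Finset.sum_congr rfl fun a _ => Finset.sum_congr rfl fun i _ => ?_
    rw [lift_mulVec]
  have h2 : nsq x = ∑ a : k, nsq (fun j => x (j, a)) := by
    simp only [nsq, Fintype.sum_prod_type]
    rw [Finset.sum_comm]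
  rw [h1, h2]
  exact Finset.sum_le_sum fun a _ => hB _

lemma lift_trace (B : Matrix m m ℂ) (M : Matrix (m × k) (m × k) ℂ) (N : Matrix m m ℂ)
    (hN : ∀ i j, N i j = ∑ a : k, M (i, a) (j, a)) :
    (lift B * M).trace = (B * N).trace := by
  have L : (lift (k := k) B * M).trace = ∑ i : m, ∑ a : k, ∑ j : m, B i j * M (j, a) (i, a) := by
    simp [Matrix.trace, Matrix.diag, Matrix.mul_apply, lift, Fintype.sum_prod_type, ite_mul,
      zero_mul, Finset.sum_ite_eq, Finset.sum_ite_eq']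
  have R : (B * N).trace = ∑ i : m, ∑ j : m, B i j * ∑ a : k, M (j, a) (i, a) := by
    simp [Matrix.trace, Matrix.diag, Matrix.mul_apply, hN]
  rw [L, R]
  refine Finset.sum_congr rfl fun i _ => ?_
  rw [Finset.sum_comm]
  exact Finset.sum_congr rfl fun j _ => (Finset.mul_sum _ _ _).symm

theorem main (M : Matrix (m × k) (m × k) ℂ) (N : Matrix m m ℂ)
    (hN : ∀ i j, N i j = ∑ a : k, M (i, a) (j, a)) :
    traceNorm N ≤ traceNorm M := by
  obtain ⟨B, hB, htr⟩ := exists_contraction N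
  have h2 := TNAux4.abs_trace_mul_le M (lift B) (lift_contraction B hB)
  rw [lift_trace B M N hN, htr] at h2
  calc traceNorm N ≤ |traceNorm N| := le_abs_self _
    _ = ‖((traceNorm N : ℝ) : ℂ)‖ := by rw [Complex.norm_real, Real.norm_eq_abs]
    _ ≤ traceNorm M := h2

end TNFinal

end TraceNormAux

theorem traceNorm_partialTrace_le {m k : Type*}
    [Fintype m] [DecidableEq m] [Fintype k] [DecidableEq k]
    (M : Matrix (m × k) (m × k) ℂ) (N : Matrix m m ℂ)
    (hN : ∀ i j, N i j = ∑ a : k, M (i, a) (j, a)) :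
    traceNorm N ≤ traceNorm M :=
  TNFinal.main M N hN
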